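/- Let Y = G + iB be an n×n complex matrix, where G and B are real n×n matrices, G is symmetric positive definite, and B is symmetric. Then the real matrix G + B·G⁻¹·B is symmetric positive definite (in particular invertible), and the real part of Y⁻¹ satisfies Re[Y⁻¹] = (G + B·G⁻¹·B)⁻¹. -/

import Mathlib

open Matrix

/-- Formula (39c): `Re[Y⁻¹] = (G + B G⁻¹ B)⁻¹`, where `G + B G⁻¹ B` is symmetric
positive definite (in particular invertible). -/
theorem complex_matrix_inv_re_formula {n : ℕ}
    (G B : Matrix (Fin n) (Fin n) ℝ) (Y : Matrix (Fin n) (Fin n) ℂ)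
    (hRe : ∀ i j, (Y i j).re = G i j) (hIm : ∀ i j, (Y i j).im = B i j)
    (hGsym : G = Gᵀ)
    (hGpd : ∀ x : Fin n → ℝ, x ≠ 0 → 0 < x ⬝ᵥ (G *ᵥ x))
    (hBsym : B = Bᵀ) :
    (G + B * G⁻¹ * B) = (G + B * G⁻¹ * B)ᵀ ∧
    (∀ x : Fin n → ℝ, x ≠ 0 → 0 < x ⬝ᵥ ((G + B * G⁻¹ * B) *ᵥ x)) ∧
    IsUnit (G + B * G⁻¹ * B) ∧
    Y⁻¹.map Complex.re = (G + B * G⁻¹ * B)⁻¹ := by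
  have hGH : G.IsHermitian := by
    rw [Matrix.IsHermitian]
    ext i j
    simp [Matrix.conjTranspose_apply, ← hGsym, congrFun (congrFun hGsym j) i]
  have hGpdM : G.PosDef := Matrix.PosDef.of_dotProduct_mulVec_pos hGH (fun x hx => by simpa using hGpd x hx)
  have hGinv : G⁻¹.PosDef := hGpdM.inv
  have hSemi : (B * G⁻¹ * B).PosSemidef := by
    have h := hGinv.posSemidef.mul_mul_conjTranspose_same B
    have hB : Bᴴ = B := by
      ext i j
      simp [Matrix.conjTranspose_apply, congrFun (congrFun hBsym j) i]
    rwa [hB] at h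
  have hMpd : (G + B * G⁻¹ * B).PosDef := hGpdM.add_posSemidef hSemi
  set M := G + B * G⁻¹ * B with hM
  have hsym : M = Mᵀ := by
    have := hMpd.isHermitian
    rw [Matrix.IsHermitian] at this
    conv_lhs => rw [← this]
    ext i j
    simp [Matrix.conjTranspose_apply]
  refine ⟨hsym, fun x hx => by simpa using hMpd.dotProduct_mulVec_pos hx, hMpd.isUnit, ?_⟩
  -- the inverse formula
  set f : ℝ →+* ℂ := Complex.ofRealHom with hf
  set Z := G⁻¹ * B * M⁻¹ with hZ
  set W := (M⁻¹).map f - Complex.I • Z.map f with hW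
  have hMdet : IsUnit M.det := (Matrix.isUnit_iff_isUnit_det M).1 hMpd.isUnit
  have hGdet : IsUnit G.det := (Matrix.isUnit_iff_isUnit_det G).1 hGpdM.isUnit
  have h1 : G * M⁻¹ + B * Z = 1 := by
    have e : G * M⁻¹ + B * Z = M * M⁻¹ := by rw [hZ, hM]; noncomm_ring
    rw [e, Matrix.mul_nonsing_inv _ hMdet]
  have h2 : B * M⁻¹ - G * Z = 0 := by
    have e : G * Z = (G * G⁻¹) * (B * M⁻¹) := by rw [hZ]; noncomm_ring
    rw [e, Matrix.mul_nonsing_inv _ hGdet, Matrix.one_mul, sub_self]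
  have hY : Y = G.map f + Complex.I • B.map f := by
    ext i j
    apply Complex.ext <;>
      simp [Matrix.add_apply, Matrix.smul_apply, Matrix.map_apply, hRe, hIm, hf]
  have hYW : Y * W = 1 := by
    rw [hY, hW]
    have expand : (G.map f + Complex.I • B.map f) *
        ((M⁻¹).map f - Complex.I • Z.map f)
        = (G.map f * (M⁻¹).map f + B.map f * Z.map f)
          + Complex.I • (B.map f * (M⁻¹).map f - G.map f * Z.map f) := by
      simp only [mul_sub, add_mul, smul_mul_assoc, mul_smul_comm, smul_smul,
        smul_sub, smul_add, Complex.I_mul_I, neg_smul, one_smul, neg_neg]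
      abel
    rw [expand, ← Matrix.map_mul, ← Matrix.map_mul, ← Matrix.map_mul,
      ← Matrix.map_mul, ← Matrix.map_add _ (map_add f), ← Matrix.map_sub _ (map_sub f), h1, h2,
      Matrix.map_one f (map_zero f) (map_one f), Matrix.map_zero f (map_zero f),
      smul_zero, add_zero]
  have hYinv : Y⁻¹ = W := Matrix.inv_eq_right_inv hYW
  rw [hYinv, hW]
  ext i j
  simp [Matrix.map_apply, Matrix.sub_apply, Matrix.smul_apply, hf]
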